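/- If Λ ⊂ ℝ is an interpolating sequence for B¹_π with interpolation constant K₀(Λ), then there exists ε > 0 such that every point λ ∈ Λ has at most two points of Λ within distance ε: #(Λ ∩ {ζ : |ζ - λ| < ε}) ≤ 2. Consequently Λ is a union of two separated sequences. -/

import Mathlib

open Complex

noncomputable section

/-- `F` is (entire) of exponential type `τ`. -/
def ExpType (τ : ℝ) (F : ℂ → ℂ) : Prop :=
  ∃ C : ℝ, ∀ z : ℂ, ‖F z‖ ≤ C * Real.exp (τ * ‖z‖)

/-- The space `B¹_τ`: entire functions of exponential type `τ`
with bounded derivative on the real line. -/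
def MemB1 (τ : ℝ) (F : ℂ → ℂ) : Prop :=
  Differentiable ℂ F ∧ ExpType τ F ∧ ∃ M : ℝ, ∀ x : ℝ, ‖deriv F x‖ ≤ M

/-- The Bernstein space `B_τ`: entire functions of exponential type `τ`
bounded on the real line. -/
def MemB (τ : ℝ) (F : ℂ → ℂ) : Prop :=
  Differentiable ℂ F ∧ ExpType τ F ∧ ∃ M : ℝ, ∀ x : ℝ, ‖F x‖ ≤ M

/-- A set of reals is separated. -/
def SepSet (Λ : Set ℝ) : Prop :=
  ∃ α > 0, ∀ x ∈ Λ, ∀ y ∈ Λ, x ≠ y → α ≤ |x - y|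

open Metric Set Filter

lemma cauchy_est {f : ℂ → ℂ} (hf : Differentiable ℂ f) (z : ℂ) {M : ℝ}
    (hM : ∀ w ∈ sphere z 1, ‖f w‖ ≤ M) :
    ‖deriv f z‖ ≤ M := by
  have := Complex.norm_deriv_le_of_forall_mem_sphere_norm_le one_pos
    hf.diffContOnCl (fun w hw => hM w hw)
  simpa using this

lemma deriv_exptype {f : ℂ → ℂ} (hf : Differentiable ℂ f) {C : ℝ}
    (hC : ∀ z : ℂ, ‖f z‖ ≤ C * Real.exp (Real.pi * ‖z‖)) :
    ∀ z : ℂ, ‖deriv f z‖ ≤ (C * Real.exp Real.pi) * Real.exp (Real.pi * ‖z‖) := by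
  have hC0 : 0 ≤ C := by
    have := hC 0
    simpa using (norm_nonneg (f 0)).trans this
  intro z
  apply cauchy_est hf
  intro w hw
  have hw1 : ‖w - z‖ = 1 := by
    simpa [Complex.dist_eq] using mem_sphere_iff_norm.mp hw
  have habs : ‖w‖ ≤ ‖z‖ + 1 := by
    calc ‖w‖ = ‖z + (w - z)‖ := by congr 1; ring
      _ ≤ ‖z‖ + ‖w - z‖ := norm_add_le _ _
      _ = ‖z‖ + 1 := by rw [hw1]
  calc ‖f w‖ ≤ C * Real.exp (Real.pi * ‖w‖) := hC w
    _ ≤ C * Real.exp (Real.pi * (‖z‖ + 1)) := by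
        gcongr
    _ = (C * Real.exp Real.pi) * Real.exp (Real.pi * ‖z‖) := by
        rw [mul_add, Real.exp_add]; ring

lemma pl_half {f : ℂ → ℂ} (hf : Differentiable ℂ f) {C M : ℝ}
    (hC : ∀ z : ℂ, ‖f z‖ ≤ C * Real.exp (Real.pi * ‖z‖))
    (hM : ∀ x : ℝ, ‖f x‖ ≤ M) (σ : ℂ) (hσ : σ = I ∨ σ = -I) :
    ∀ w : ℂ, 0 ≤ w.re → ‖f (σ * w)‖ ≤ M * Real.exp (Real.pi * w.re) := by
  have hC0 : 0 ≤ C := by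
    have := hC 0
    simpa using (norm_nonneg (f 0)).trans this
  set g : ℂ → ℂ := fun w => Complex.exp (-(Real.pi : ℂ) * w) * f (σ * w) with hg
  have hgd : Differentiable ℂ g :=
    ((differentiable_id.const_mul _).cexp).mul (hf.comp (differentiable_id.const_mul σ))
  have hσ1 : ‖σ‖ = 1 := by rcases hσ with h | h <;> simp [h]
  have hgn : ∀ w : ℂ, ‖g w‖
      = Real.exp (-(Real.pi * w.re)) * ‖f (σ * w)‖ := by
    intro w
    rw [hg]
    simp only [norm_mul, Complex.norm_exp]
    congr 2
    simp [Complex.re_ofReal_mul]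
  have main : ∀ w : ℂ, 0 ≤ w.re → ‖g w‖ ≤ M := by
    intro w hw
    refine PhragmenLindelof.right_half_plane_of_bounded_on_real hgd.diffContOnCl
      ⟨1, one_lt_two, 2 * Real.pi, ?_⟩ ?_ ?_ hw
    · refine Asymptotics.IsBigO.of_bound C (Filter.Eventually.of_forall fun v => ?_)
      have hv1 : ‖σ * v‖ = ‖v‖ := by rw [norm_mul, hσ1, one_mul]
      have hre : -(Real.pi * v.re) ≤ Real.pi * ‖v‖ := by
        have h1 : -v.re ≤ ‖v‖ := (neg_le_abs _).trans (Complex.abs_re_le_norm v)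
        nlinarith [Real.pi_nonneg]
      have : ‖g v‖ ≤ C * Real.exp (2 * Real.pi * ‖v‖) := by
        rw [hgn v]
        calc Real.exp (-(Real.pi * v.re)) * ‖f (σ * v)‖
            ≤ Real.exp (Real.pi * ‖v‖) * (C * Real.exp (Real.pi * ‖v‖)) := by
              have := hC (σ * v); rw [hv1] at this
              exact mul_le_mul (Real.exp_le_exp.2 hre) this (norm_nonneg _)
                (Real.exp_pos _).le
          _ = C * Real.exp (2 * Real.pi * ‖v‖) := by
              rw [show (2:ℝ) * Real.pi * ‖v‖
                  = Real.pi * ‖v‖ + Real.pi * ‖v‖ by ring, Real.exp_add]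
              ring
      simpa [Real.abs_exp] using this
    · refine Filter.isBoundedUnder_of_eventually_le (a := C) ?_
      filter_upwards [Filter.eventually_ge_atTop (0 : ℝ)] with x hx
      have : ‖g x‖ ≤ C := by
        rw [hgn]
        have hre : ((x : ℂ)).re = x := Complex.ofReal_re x
        have hax : ‖(x : ℂ)‖ = x := by
          rw [Complex.norm_real, Real.norm_eq_abs, _root_.abs_of_nonneg hx]
        have hfb : ‖f (σ * x)‖ ≤ C * Real.exp (Real.pi * x) := by
          have := hC (σ * x)
          rwa [norm_mul, hσ1, one_mul, hax] at this
        rw [hre]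
        calc Real.exp (-(Real.pi * x)) * ‖f (σ * x)‖
            ≤ Real.exp (-(Real.pi * x)) * (C * Real.exp (Real.pi * x)) := by
              exact mul_le_mul_of_nonneg_left hfb (Real.exp_pos _).le
          _ = C := by
              rw [show Real.exp (-(Real.pi * x)) * (C * Real.exp (Real.pi * x))
                  = C * (Real.exp (-(Real.pi * x)) * Real.exp (Real.pi * x)) by ring,
                ← Real.exp_add]
              simp
      simpa using this
    · intro x
      have hre : ((x : ℂ) * I).re = 0 := by simp
      have : ‖g (x * I)‖ = ‖f (σ * (x * I))‖ := by
        rw [hgn, hre]; simp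
      rw [this]
      rcases hσ with h | h
      · have : σ * ((x : ℂ) * I) = ((-x : ℝ) : ℂ) := by rw [h]; push_cast; ring_nf; simp [Complex.I_sq]
        rw [this]; exact hM (-x)
      · have : σ * ((x : ℂ) * I) = ((x : ℝ) : ℂ) := by rw [h]; push_cast; ring_nf; simp [Complex.I_sq]
        rw [this]; exact hM x
  intro w hw
  have h1 := main w hw
  rw [hgn] at h1
  have h2 : Real.exp (-(Real.pi * w.re)) * ‖f (σ * w)‖ ≤ M := h1
  calc ‖f (σ * w)‖
      = Real.exp (Real.pi * w.re) * (Real.exp (-(Real.pi * w.re)) * ‖f (σ * w)‖) := by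
        rw [← mul_assoc, ← Real.exp_add]; simp
    _ ≤ Real.exp (Real.pi * w.re) * M := by
        exact mul_le_mul_of_nonneg_left h2 (Real.exp_pos _).le
    _ = M * Real.exp (Real.pi * w.re) := mul_comm _ _

lemma strip_bound {f : ℂ → ℂ} (hf : Differentiable ℂ f) {C M : ℝ}
    (hC : ∀ z : ℂ, ‖f z‖ ≤ C * Real.exp (Real.pi * ‖z‖))
    (hM : ∀ x : ℝ, ‖f x‖ ≤ M) :
    ∀ z : ℂ, ‖f z‖ ≤ M * Real.exp (Real.pi * |z.im|) := by
  intro z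
  rcases le_total 0 z.im with h | h
  · have hw : (0:ℝ) ≤ (-I * z).re := by simp [h]
    have := pl_half hf hC hM I (Or.inl rfl) (-I * z) hw
    have hz : I * (-I * z) = z := by ring_nf; simp [Complex.I_sq]
    rw [hz] at this
    have hre : (-I * z).re = z.im := by simp
    rw [_root_.abs_of_nonneg h]
    rwa [hre] at this
  · have hw : (0:ℝ) ≤ (I * z).re := by simp [neg_nonneg, h]
    have := pl_half hf hC hM (-I) (Or.inr rfl) (I * z) hw
    have hz : -I * (I * z) = z := by ring_nf; simp [Complex.I_sq]
    rw [hz] at this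
    have hre : (I * z).re = -z.im := by simp
    rw [_root_.abs_of_nonpos h]
    rwa [hre] at this

lemma second_deriv_bound {f : ℂ → ℂ} (hf : Differentiable ℂ f) {C M : ℝ}
    (hC : ∀ z : ℂ, ‖f z‖ ≤ C * Real.exp (Real.pi * ‖z‖))
    (hM : ∀ x : ℝ, ‖deriv f x‖ ≤ M) :
    ∀ x : ℝ, ‖deriv (deriv f) x‖ ≤ M * Real.exp Real.pi := by
  have hdf : Differentiable ℂ (deriv f) :=
    analyticOnNhd_univ_iff_differentiable.mp
      ((analyticOnNhd_univ_iff_differentiable.mpr hf).deriv)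
  have hM0 : 0 ≤ M := (norm_nonneg _).trans (hM 0)
  have hC' := deriv_exptype hf hC
  have strip := strip_bound hdf hC' hM
  intro x
  apply cauchy_est hdf
  intro w hw
  have hw1 : ‖w - x‖ = 1 := by
    simpa [Complex.dist_eq] using mem_sphere_iff_norm.mp hw
  have him : |w.im| ≤ 1 := by
    have : |(w - (x:ℂ)).im| ≤ ‖w - x‖ := Complex.abs_im_le_norm _
    simpa [hw1] using this
  calc ‖deriv f w‖ ≤ M * Real.exp (Real.pi * |w.im|) := strip w
    _ ≤ M * Real.exp Real.pi := by
        have : Real.pi * |w.im| ≤ Real.pi := by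
          nlinarith [Real.pi_nonneg, abs_nonneg w.im]
        exact mul_le_mul_of_nonneg_left (Real.exp_le_exp.2 this) hM0

lemma key_gap (lam : ℤ → ℝ) (hmono : StrictMono lam) (K0 : ℝ)
    (hinterp : ∀ (a : ℤ → ℂ) (B : ℝ),
      (∀ j k : ℤ, j ≠ k →
        ‖(a j - a k) / ((lam j : ℂ) - (lam k : ℂ))‖ ≤ B) →
      ∃ F : ℂ → ℂ, (Differentiable ℂ F ∧
          (∃ C : ℝ, ∀ z : ℂ, ‖F z‖ ≤ C * Real.exp (Real.pi * ‖z‖)) ∧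
          ∃ M : ℝ, ∀ x : ℝ, ‖deriv F x‖ ≤ M) ∧
        (∀ k : ℤ, F (lam k) = a k) ∧
        ∀ x : ℝ, ‖deriv F x‖ ≤ K0 * B) (b : ℤ) :
    2 * (1 / (4 * Real.exp Real.pi * (|K0| + 1))) ≤ lam (b + 1) - lam (b - 1) := by
  set ε : ℝ := 1 / (4 * Real.exp Real.pi * (|K0| + 1)) with hεdef
  have hεpos : 0 < ε := by positivity
  by_contra hcon
  push_neg at hcon
  set d1 : ℝ := lam b - lam (b - 1) with hd1def
  set d2 : ℝ := lam (b + 1) - lam b with hd2def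
  have hd1 : 0 < d1 := sub_pos.2 (hmono (by omega : b - 1 < b))
  have hd2 : 0 < d2 := sub_pos.2 (hmono (by omega : b < b + 1))
  set g : ℝ := min d1 d2 with hgdef
  have hgpos : 0 < g := lt_min hd1 hd2
  set a : ℤ → ℂ := fun j => if j = b then (g : ℂ) else 0 with hadef
  have hsep : ∀ k : ℤ, k ≠ b → g ≤ |lam b - lam k| := by
    intro k hk
    rcases lt_or_gt_of_ne hk with h | h
    · have h1 : lam k ≤ lam (b - 1) := hmono.monotone (by omega)
      have h2 : 0 < lam b - lam k := sub_pos.2 (hmono h)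
      rw [_root_.abs_of_pos h2]
      calc g ≤ d1 := min_le_left _ _
        _ ≤ lam b - lam k := by simp only [hd1def]; linarith
    · have h1 : lam (b + 1) ≤ lam k := hmono.monotone (by omega)
      have h2 : lam b - lam k < 0 := sub_neg.2 (hmono h)
      rw [_root_.abs_of_neg h2]
      calc g ≤ d2 := min_le_right _ _
        _ ≤ -(lam b - lam k) := by simp only [hd2def]; linarith
  have hB : ∀ j k : ℤ, j ≠ k →
      ‖(a j - a k) / ((lam j : ℂ) - (lam k : ℂ))‖ ≤ 1 := by
    intro j k hjk
    have hden : ((lam j : ℂ) - (lam k : ℂ)) = ((lam j - lam k : ℝ) : ℂ) := by push_cast; ring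
    rw [norm_div, hden, Complex.norm_real, Real.norm_eq_abs]
    by_cases hj : j = b
    · have hk : k ≠ b := by rw [hj] at hjk; exact fun h => hjk h.symm
      have hnum : a j - a k = (g : ℂ) := by simp [hadef, hj, hk]
      rw [hnum, Complex.norm_real, Real.norm_eq_abs, _root_.abs_of_pos hgpos]
      have hden2 : g ≤ |lam j - lam k| := by rw [hj]; exact hsep k hk
      rw [div_le_one (lt_of_lt_of_le hgpos hden2)]
      exact hden2
    · by_cases hk : k = b
      · have hnum : a j - a k = -(g : ℂ) := by simp [hadef, hj, hk]
        rw [hnum, norm_neg, Complex.norm_real, Real.norm_eq_abs, _root_.abs_of_pos hgpos]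
        have hden2 : g ≤ |lam j - lam k| := by
          rw [hk]
          have := hsep j hj
          rwa [abs_sub_comm] at this
        rw [div_le_one (lt_of_lt_of_le hgpos hden2)]
        exact hden2
      · have hnum : a j - a k = 0 := by simp [hadef, hj, hk]
        rw [hnum]
        simp
  obtain ⟨F, ⟨hFdiff, ⟨C, hFtype⟩, -⟩, hFval, hFd⟩ := hinterp a 1 hB
  have hFd' : ∀ x : ℝ, ‖deriv F x‖ ≤ K0 := by
    intro x; simpa using hFd x
  have hK0 : 0 ≤ K0 := (norm_nonneg _).trans (hFd' 0)
  have hdd := second_deriv_bound hFdiff hFtype hFd'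
  have hdF : Differentiable ℂ (deriv F) :=
    analyticOnNhd_univ_iff_differentiable.mp
      ((analyticOnNhd_univ_iff_differentiable.mpr hFdiff).deriv)
  have hu : ∀ x : ℝ, HasDerivAt (fun t : ℝ => (F t).re) ((deriv F x).re) x :=
    fun x => ((hFdiff _).hasDerivAt).real_of_complex
  have hv : ∀ x : ℝ, HasDerivAt (fun t : ℝ => (deriv F t).re) ((deriv (deriv F) x).re) x :=
    fun x => ((hdF _).hasDerivAt).real_of_complex
  have hvalb : (F (lam b)).re = g := by rw [hFval b]; simp [hadef]
  have hvalm : (F (lam (b - 1))).re = 0 := by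
    rw [hFval (b - 1)]; simp [hadef, (by omega : b - 1 ≠ b)]
  have hvalp : (F (lam (b + 1))).re = 0 := by
    rw [hFval (b + 1)]; simp [hadef, (by omega : b + 1 ≠ b)]
  have hab1 : lam (b - 1) < lam b := hmono (by omega)
  have hab2 : lam b < lam (b + 1) := hmono (by omega)
  obtain ⟨ξ₁, hξ₁mem, hξ₁⟩ := exists_hasDerivAt_eq_slope (fun t : ℝ => (F t).re)
    (fun t : ℝ => (deriv F t).re) hab1
    (fun x _ => (hu x).continuousAt.continuousWithinAt) (fun x _ => hu x)
  obtain ⟨ξ₂, hξ₂mem, hξ₂⟩ := exists_hasDerivAt_eq_slope (fun t : ℝ => (F t).re)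
    (fun t : ℝ => (deriv F t).re) hab2
    (fun x _ => (hu x).continuousAt.continuousWithinAt) (fun x _ => hu x)
  rw [hvalb, hvalm] at hξ₁
  rw [hvalp, hvalb] at hξ₂
  have hξ₁lt : ξ₁ < lam b := hξ₁mem.2
  have hξ₂gt : lam b < ξ₂ := hξ₂mem.1
  have hξlt : ξ₁ < ξ₂ := hξ₁lt.trans hξ₂gt
  obtain ⟨η, hηmem, hη⟩ := exists_hasDerivAt_eq_slope (fun t : ℝ => (deriv F t).re)
    (fun t : ℝ => (deriv (deriv F) t).re) hξlt
    (fun x _ => (hv x).continuousAt.continuousWithinAt) (fun x _ => hv x)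
  rw [hξ₁, hξ₂] at hη
  set S : ℝ := g / d1 + g / d2 with hSdef
  have hS1 : 1 ≤ S := by
    rcases le_total d1 d2 with h | h
    · have hg' : g = d1 := min_eq_left h
      have h2 : 0 < g / d2 := div_pos hgpos hd2
      have h3 : g / d1 = 1 := by rw [hg', div_self hd1.ne']
      rw [hSdef, h3]
      linarith
    · have hg' : g = d2 := min_eq_right h
      have h1 : 0 < g / d1 := div_pos hgpos hd1
      have h3 : g / d2 = 1 := by rw [hg', div_self hd2.ne']
      rw [hSdef, h3]
      linarith
  have hSpos : 0 < S := lt_of_lt_of_le one_pos hS1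
  set T : ℝ := ξ₂ - ξ₁ with hTdef
  have hTpos : 0 < T := sub_pos.2 hξlt
  have hTlt : T < 2 * ε := by
    have h1 : lam (b - 1) < ξ₁ := hξ₁mem.1
    have h2 : ξ₂ < lam (b + 1) := hξ₂mem.2
    rw [hTdef]; linarith
  have hηval : (deriv (deriv F) η).re = -S / T := by
    rw [hη]; rw [hSdef, hTdef]; ring
  have habs : S / T ≤ K0 * Real.exp Real.pi := by
    have h1 : |(deriv (deriv F) η).re| ≤ ‖deriv (deriv F) η‖ :=
      Complex.abs_re_le_norm _
    have h2 := hdd η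
    rw [hηval] at h1
    rw [abs_div, abs_neg, _root_.abs_of_pos hSpos, _root_.abs_of_pos hTpos] at h1
    linarith
  have hlow : 1 / (2 * ε) < S / T := by
    have h1 : 1 / (2 * ε) < 1 / T := one_div_lt_one_div_of_lt hTpos hTlt
    have h2 : 1 / T ≤ S / T := (div_le_div_iff_of_pos_right hTpos).2 hS1
    linarith
  have hne : (0:ℝ) < 4 * Real.exp Real.pi * (|K0| + 1) := by positivity
  have hfin : 1 / (2 * ε) = 2 * Real.exp Real.pi * (|K0| + 1) := by
    rw [hεdef]
    field_simp
    ring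
  rw [hfin] at hlow
  have hcontra : 2 * Real.exp Real.pi * (|K0| + 1) < K0 * Real.exp Real.pi := by
    linarith
  nlinarith [Real.exp_pos Real.pi, le_abs_self K0, abs_nonneg K0]

/-- an interpolating sequence for `B¹_π` (with interpolation
constant `K₀`) has at most two points in every `ε`-ball around each of its
points, for some `ε > 0`; consequently it is a union of two separated
sequences. -/
theorem stmt_6 (lam : ℤ → ℝ) (hmono : StrictMono lam) (K0 : ℝ)
    (hinterp : ∀ (a : ℤ → ℂ) (B : ℝ),
      (∀ j k : ℤ, j ≠ k →
        ‖(a j - a k) / ((lam j : ℂ) - (lam k : ℂ))‖ ≤ B) →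
      ∃ F : ℂ → ℂ, MemB1 Real.pi F ∧ (∀ k : ℤ, F (lam k) = a k) ∧
        ∀ x : ℝ, ‖deriv F x‖ ≤ K0 * B) :
    (∃ ε > 0, ∀ k j₁ j₂ j₃ : ℤ, j₁ ≠ j₂ → j₁ ≠ j₃ → j₂ ≠ j₃ →
      ¬(|lam j₁ - lam k| < ε ∧ |lam j₂ - lam k| < ε ∧ |lam j₃ - lam k| < ε)) ∧
    (∃ Λ₁ Λ₂ : Set ℝ, Set.range lam = Λ₁ ∪ Λ₂ ∧ SepSet Λ₁ ∧ SepSet Λ₂) := by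
  set ε : ℝ := 1 / (4 * Real.exp Real.pi * (|K0| + 1)) with hεdef
  have hεpos : 0 < ε := by positivity
  have key : ∀ b : ℤ, 2 * ε ≤ lam (b + 1) - lam (b - 1) := by
    intro b
    exact key_gap lam hmono K0 (fun a B h => hinterp a B h) b
  have main : ∀ p q : ℤ, p + 2 ≤ q → 2 * ε ≤ lam q - lam p := by
    intro p q h2
    have hk := key (p + 1)
    rw [show p + 1 + 1 = p + 2 from by ring, show p + 1 - 1 = p from by ring] at hk
    have hle : lam (p + 2) ≤ lam q := hmono.monotone h2
    linarith
  constructor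
  · refine ⟨ε, hεpos, ?_⟩
    intro k j₁ j₂ j₃ h12 h13 h23 ⟨h1, h2, h3⟩
    set i : ℤ := min j₁ (min j₂ j₃) with hidef
    set u : ℤ := max j₁ (max j₂ j₃) with hudef
    have hiu : i + 2 ≤ u := by omega
    have hi : |lam i - lam k| < ε := by
      rcases (show i = j₁ ∨ i = j₂ ∨ i = j₃ by omega) with h | h | h <;> rw [h] <;> assumption
    have hu : |lam u - lam k| < ε := by
      rcases (show u = j₁ ∨ u = j₂ ∨ u = j₃ by omega) with h | h | h <;> rw [h] <;> assumption
    have h5 := main i u hiu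
    rcases abs_lt.mp hi with ⟨hi1, hi2⟩
    rcases abs_lt.mp hu with ⟨hu1, hu2⟩
    linarith
  · have hsep : ∀ s : Set ℤ, (∀ j ∈ s, ∀ j' ∈ s, j < j' → j + 2 ≤ j') →
        SepSet (lam '' s) := by
      intro s hs
      refine ⟨2 * ε, by positivity, ?_⟩
      rintro x ⟨j, hj, rfl⟩ y ⟨j', hj', rfl⟩ hxy
      have hne : j ≠ j' := fun h => hxy (by rw [h])
      rcases lt_or_gt_of_ne hne with h | h
      · have hm := main j j' (hs j hj j' hj' h)
        have hlt : lam j < lam j' := hmono h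
        rw [abs_sub_comm, _root_.abs_of_nonneg (by linarith)]
        linarith
      · have hm := main j' j (hs j' hj' j hj h)
        have hlt : lam j' < lam j := hmono h
        rw [_root_.abs_of_nonneg (by linarith)]
        linarith
    refine ⟨lam '' {j | j % 2 = 0}, lam '' {j | j % 2 ≠ 0}, ?_, ?_, ?_⟩
    · ext x
      constructor
      · rintro ⟨j, rfl⟩
        by_cases h : j % 2 = 0
        · exact Or.inl ⟨j, h, rfl⟩
        · exact Or.inr ⟨j, h, rfl⟩
      · rintro (⟨j, -, rfl⟩ | ⟨j, -, rfl⟩) <;> exact ⟨j, rfl⟩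
    · exact hsep _ (by intro j hj j' hj' hlt; simp only [Set.mem_setOf_eq] at hj hj'; omega)
    · exact hsep _ (by intro j hj j' hj' hlt; simp only [Set.mem_setOf_eq] at hj hj'; omega)
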